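/- For k, m ∈ Σ_q, the function a₁(k,m) on Σ_q² defined by a₁(k,m)(x,y) = 1 if x=k and y≠m, = -1 if y=m and x≠k, and = 0 otherwise, satisfies the eigenfunction equation for eigenvalue 2(q-1)-q = q-2 on the Hamming graph H(2,q), and its support has cardinality 2(q-1). -/

import Mathlib

/-- Sum of `f` over the neighbors of `x` in the Hamming graph `H(n,q)`. -/
noncomputable def adjSum (n q : ℕ) (f : (Fin n → Fin q) → ℝ) (x : Fin n → Fin q) : ℝ :=
  ∑ y : Fin n → Fin q, if hammingDist x y = 1 then f y else 0

/-- `f` satisfies the eigenfunction equation for eigenvalue `lam` on `H(n,q)`. -/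
def IsEigenfun (n q : ℕ) (lam : ℝ) (f : (Fin n → Fin q) → ℝ) : Prop :=
  ∀ x, adjSum n q f x = lam * f x

/-- `f ∈ U_i(n,q)`, the eigenspace for eigenvalue `n(q-1) - q i`. -/
def memU (n q i : ℕ) (f : (Fin n → Fin q) → ℝ) : Prop :=
  IsEigenfun n q ((n : ℝ) * ((q : ℝ) - 1) - (q : ℝ) * (i : ℝ)) f

/-- `f ∈ U_{[i,j]}(n,q) = U_i ⊕ ⋯ ⊕ U_j`. -/
def memUI (n q i j : ℕ) (f : (Fin n → Fin q) → ℝ) : Prop :=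
  ∃ g : ℕ → (Fin n → Fin q) → ℝ,
    (∀ t ∈ Finset.Icc i j, memU n q t (g t)) ∧ f = ∑ t ∈ Finset.Icc i j, g t

/-- The cardinality of the support of `f : Σ_q^n → ℝ`. -/
noncomputable def suppCard (n q : ℕ) (f : (Fin n → Fin q) → ℝ) : ℕ :=
  Nat.card {x : Fin n → Fin q // f x ≠ 0}

lemma hd2 (q : ℕ) (x : Fin 2 → Fin q) (a b : Fin q) :
    hammingDist x ![a, b] = 1 ↔ (x 0 = a ∧ x 1 ≠ b) ∨ (x 0 ≠ a ∧ x 1 = b) := by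
  rw [hammingDist, Finset.card_filter, Fin.sum_univ_two]
  simp only [Matrix.cons_val_zero, Matrix.cons_val_one, Matrix.head_cons]
  by_cases h0 : x 0 = a <;> by_cases h1 : x 1 = b <;> simp [h0, h1]

lemma sum_fin2 (q : ℕ) (f : (Fin 2 → Fin q) → ℝ) :
    ∑ y : Fin 2 → Fin q, f y = ∑ a : Fin q, ∑ b : Fin q, f ![a, b] := by
  rw [← (piFinTwoEquiv (fun _ => Fin q)).symm.sum_comp, Fintype.sum_prod_type]
  simp only [piFinTwoEquiv]
  refine Finset.sum_congr rfl fun a _ => Finset.sum_congr rfl fun b _ => ?_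
  congr 1

lemma sum_ite_ne (q : ℕ) (s : Finset (Fin q)) (c : ℝ) (m : Fin q) (hm : m ∈ s) :
    ∑ b ∈ s, (if b = m then 0 else c) = ((s.card : ℝ) - 1) * c := by
  rw [← Finset.sum_erase_add _ _ hm, if_pos rfl, add_zero]
  rw [Finset.sum_congr rfl (fun b hb => if_neg (Finset.ne_of_mem_erase hb))]
  rw [Finset.sum_const, Finset.card_erase_of_mem hm, nsmul_eq_mul]
  congr 1
  have : 1 ≤ s.card := Finset.card_pos.2 ⟨m, hm⟩
  push_cast [Nat.cast_sub this]
  ring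

lemma split_sum (q : ℕ) (x0 x1 : Fin q) (v : Fin q → Fin q → ℝ) :
    ∑ a : Fin q, ∑ b : Fin q,
        (if (x0 = a ∧ x1 ≠ b) ∨ (x0 ≠ a ∧ x1 = b) then v a b else 0)
      = (∑ b ∈ Finset.univ.erase x1, v x0 b) + ∑ a ∈ Finset.univ.erase x0, v a x1 := by
  rw [← Finset.sum_erase_add _ _ (Finset.mem_univ x0)]
  rw [add_comm]
  congr 1
  · -- a = x0 term
    rw [← Finset.sum_erase_add (Finset.univ : Finset (Fin q))
        (fun b => if (x0 = x0 ∧ x1 ≠ b) ∨ (x0 ≠ x0 ∧ x1 = b) then v x0 b else 0)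
        (Finset.mem_univ x1)]
    rw [if_neg (by simp), add_zero]
    refine Finset.sum_congr rfl fun b hb => ?_
    rw [if_pos (Or.inl ⟨rfl, fun h => (Finset.ne_of_mem_erase hb) h.symm⟩)]
  · -- a ≠ x0 terms
    refine Finset.sum_congr rfl fun a ha => ?_
    have hax : x0 ≠ a := fun h => (Finset.ne_of_mem_erase ha) h.symm
    have : ∀ b, (if (x0 = a ∧ x1 ≠ b) ∨ (x0 ≠ a ∧ x1 = b) then v a b else 0)
        = (if x1 = b then v a b else 0) := by
      intro b; by_cases hb : x1 = b <;> simp [hb, hax]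
    rw [Finset.sum_congr rfl fun b _ => this b, Finset.sum_ite_eq]
    simp

theorem a1_eigenfun_and_support (q : ℕ) (k m : Fin q) :
    IsEigenfun 2 q ((q : ℝ) - 2)
      (fun x : Fin 2 → Fin q =>
        if x 0 = k ∧ x 1 ≠ m then (1 : ℝ)
        else if x 1 = m ∧ x 0 ≠ k then -1 else 0) ∧
    suppCard 2 q
      (fun x : Fin 2 → Fin q =>
        if x 0 = k ∧ x 1 ≠ m then (1 : ℝ)
        else if x 1 = m ∧ x 0 ≠ k then -1 else 0) = 2 * (q - 1) := by
  have hq : 1 ≤ q := Fin.pos k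
  set v : Fin q → Fin q → ℝ := fun a b =>
    if a = k ∧ b ≠ m then (1 : ℝ) else if b = m ∧ a ≠ k then -1 else 0 with hv
  constructor
  · intro x
    rw [adjSum, sum_fin2 q]
    have : ∀ a b : Fin q,
        (if hammingDist x ![a, b] = 1 then
          (if (![a,b]) 0 = k ∧ (![a,b]) 1 ≠ m then (1:ℝ)
           else if (![a,b]) 1 = m ∧ (![a,b]) 0 ≠ k then -1 else 0) else 0)
        = (if (x 0 = a ∧ x 1 ≠ b) ∨ (x 0 ≠ a ∧ x 1 = b) then v a b else 0) := by
      intro a b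
      rw [hv]
      simp only [Matrix.cons_val_zero, Matrix.cons_val_one, Matrix.head_cons]
      by_cases h : hammingDist x ![a,b] = 1
      · rw [if_pos h, if_pos ((hd2 q x a b).1 h)]
        rfl
      · rw [if_neg h, if_neg (fun hc => h ((hd2 q x a b).2 hc))]
    rw [Finset.sum_congr rfl fun a _ => Finset.sum_congr rfl fun b _ => this a b]
    rw [split_sum q (x 0) (x 1) v]
    have hcard : ((Finset.univ.erase (x 0)).card : ℝ) = (q : ℝ) - 1 := by
      rw [Finset.card_erase_of_mem (Finset.mem_univ _), Finset.card_univ,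
        Fintype.card_fin, Nat.cast_sub hq, Nat.cast_one]
    have hcard1 : ((Finset.univ.erase (x 1)).card : ℝ) = (q : ℝ) - 1 := by
      rw [Finset.card_erase_of_mem (Finset.mem_univ _), Finset.card_univ,
        Fintype.card_fin, Nat.cast_sub hq, Nat.cast_one]
    by_cases h0 : x 0 = k <;> by_cases h1 : x 1 = m
    · -- both: sum = (q-1) + (-(q-1)) = 0
      have e1 : ∑ b ∈ Finset.univ.erase (x 1), v (x 0) b
          = ((q:ℝ) - 1) := by
        have h : ∀ b ∈ Finset.univ.erase (x 1), v (x 0) b = 1 := by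
          intro b hb
          have : b ≠ m := h1 ▸ Finset.ne_of_mem_erase hb
          simp [hv, h0, this]
        rw [Finset.sum_congr rfl h, Finset.sum_const, nsmul_eq_mul, mul_one, hcard1]
      have e2 : ∑ a ∈ Finset.univ.erase (x 0), v a (x 1)
          = -(((q:ℝ) - 1)) := by
        have h : ∀ a ∈ Finset.univ.erase (x 0), v a (x 1) = -1 := by
          intro a ha
          have : a ≠ k := h0 ▸ Finset.ne_of_mem_erase ha
          simp [hv, h1, this]
        rw [Finset.sum_congr rfl h, Finset.sum_const, nsmul_eq_mul, hcard]
        ring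
      rw [e1, e2]
      simp [h0, h1]
    · -- x0 = k, x1 ≠ m : result q - 2
      have e1 : ∑ b ∈ Finset.univ.erase (x 1), v (x 0) b = (q:ℝ) - 2 := by
        have : ∀ b ∈ Finset.univ.erase (x 1), v (x 0) b = if b = m then 0 else 1 := by
          intro b _; by_cases hbm : b = m <;> simp [hv, h0, hbm]
        rw [Finset.sum_congr rfl this, sum_ite_ne q _ 1 m
          (Finset.mem_erase.2 ⟨fun h => h1 h.symm, Finset.mem_univ m⟩), hcard1]
        ring
      have e2 : ∑ a ∈ Finset.univ.erase (x 0), v a (x 1) = 0 := by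
        refine Finset.sum_eq_zero fun a ha => ?_
        have hak : a ≠ k := h0 ▸ Finset.ne_of_mem_erase ha
        simp [hv, hak, h1]
      rw [e1, e2, add_zero]
      simp [h0, h1]
    · -- x0 ≠ k, x1 = m : result -(q-2)
      have e1 : ∑ b ∈ Finset.univ.erase (x 1), v (x 0) b = 0 := by
        refine Finset.sum_eq_zero fun b hb => ?_
        have hbm : b ≠ m := h1 ▸ Finset.ne_of_mem_erase hb
        simp [hv, hbm, h0]
      have e2 : ∑ a ∈ Finset.univ.erase (x 0), v a (x 1) = -((q:ℝ) - 2) := by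
        have : ∀ a ∈ Finset.univ.erase (x 0), v a (x 1) = if a = k then 0 else -1 := by
          intro a _; by_cases hak : a = k <;> simp [hv, h1, hak]
        rw [Finset.sum_congr rfl this, sum_ite_ne q _ (-1) k
          (Finset.mem_erase.2 ⟨fun h => h0 h.symm, Finset.mem_univ k⟩), hcard]
        ring
      rw [e1, e2, zero_add]
      simp [h0, h1]
    · -- both ≠ : result 0
      have e1 : ∑ b ∈ Finset.univ.erase (x 1), v (x 0) b = -1 := by
        have : ∀ b ∈ Finset.univ.erase (x 1), v (x 0) b = if b = m then -1 else 0 := by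
          intro b _; by_cases hbm : b = m <;> simp [hv, h0, hbm]
        rw [Finset.sum_congr rfl this]
        rw [Finset.sum_ite_eq' (Finset.univ.erase (x 1)) m (fun _ => (-1:ℝ))]
        rw [if_pos (Finset.mem_erase.2 ⟨fun h => h1 h.symm, Finset.mem_univ m⟩)]
      have e2 : ∑ a ∈ Finset.univ.erase (x 0), v a (x 1) = 1 := by
        have : ∀ a ∈ Finset.univ.erase (x 0), v a (x 1) = if a = k then 1 else 0 := by
          intro a _; by_cases hak : a = k <;> simp [hv, h1, hak]
        rw [Finset.sum_congr rfl this]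
        rw [Finset.sum_ite_eq' (Finset.univ.erase (x 0)) k (fun _ => (1:ℝ))]
        rw [if_pos (Finset.mem_erase.2 ⟨fun h => h0 h.symm, Finset.mem_univ k⟩)]
      rw [e1, e2]
      simp [h0, h1]
  · -- support cardinality
    rw [suppCard]
    have hequiv : {x : Fin 2 → Fin q //
        (if x 0 = k ∧ x 1 ≠ m then (1:ℝ) else if x 1 = m ∧ x 0 ≠ k then -1 else 0) ≠ 0}
        ≃ {p : Fin q × Fin q // (p.1 = k ∧ p.2 ≠ m) ∨ (p.2 = m ∧ p.1 ≠ k)} := by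
      refine ((piFinTwoEquiv (fun _ => Fin q)).subtypeEquiv fun x => ?_)
      simp only [piFinTwoEquiv]
      by_cases h0 : x 0 = k <;> by_cases h1 : x 1 = m <;> simp [h0, h1]
    rw [Nat.card_congr hequiv, Nat.card_eq_fintype_card, Fintype.card_subtype]
    have hset : (Finset.univ.filter fun p : Fin q × Fin q =>
          (p.1 = k ∧ p.2 ≠ m) ∨ (p.2 = m ∧ p.1 ≠ k))
        = ({k} ×ˢ Finset.univ.erase m) ∪ (Finset.univ.erase k ×ˢ {m}) := by
      ext p
      simp only [Finset.mem_filter, Finset.mem_univ, true_and, Finset.mem_union,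
        Finset.mem_product, Finset.mem_singleton, Finset.mem_erase, and_true]
      tauto
    rw [hset, Finset.card_union_of_disjoint, Finset.card_product, Finset.card_product]
    · simp only [Finset.card_singleton, Finset.card_erase_of_mem (Finset.mem_univ _),
        Finset.card_univ, Fintype.card_fin]
      ring
    · rw [Finset.disjoint_left]
      rintro p hp hp'
      rw [Finset.mem_product, Finset.mem_singleton] at hp
      rw [Finset.mem_product, Finset.mem_erase] at hp'
      exact hp'.1.1 hp.1
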